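/- There is a constant Λ₁ such that for every t > 0 one has η(η(t)·t) ≤ Λ₁·η(t). -/

import Mathlib

open Set Filter Topology

/-- Hypotheses (P1)–(P3) on `φ(t) = η(t)·t`. -/
def PhiHyp (φ η : ℝ → ℝ) (Lam0 : ℝ) : Prop :=
  (∀ t : ℝ, 0 ≤ t → φ t = η t * t) ∧
  (∀ t : ℝ, 0 ≤ t → 1 ≤ η t) ∧
  MonotoneOn φ (Set.Ici 0) ∧
  (∀ t₀ : ℝ, 0 < t₀ → ∃ ε > (0 : ℝ), ∃ K : NNReal,
    LipschitzOnWith K φ (Set.Ioo (t₀ - ε) (t₀ + ε))) ∧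
  (∀ t : ℝ, 0 ≤ t → t ≤ φ t) ∧
  AntitoneOn η (Set.Ioo 0 1) ∧
  MonotoneOn η (Set.Ici 1) ∧
  (∃ T : ℝ, ∀ t : ℝ, T ≤ t → DifferentiableAt ℝ η t) ∧
  Filter.Tendsto (fun t => t * deriv η t / η t * Real.log (η t)) Filter.atTop (nhds 0) ∧
  0 < Lam0 ∧
  (∀ s t : ℝ, 0 < s → 0 < t → η (s * t) ≤ Lam0 * η s * η t)

/-- Lemma 2.4 (iii): there is `Λ₁` such that `η(η(t)·t) ≤ Λ₁·η(t)` for all `t > 0`. -/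
theorem statement3 (φ η : ℝ → ℝ) (Lam0 : ℝ) (hφ : PhiHyp φ η Lam0) :
    ∃ Lam1 : ℝ, ∀ t : ℝ, 0 < t → η (η t * t) ≤ Lam1 * η t := by
  obtain ⟨hφη, hη1, hφmono, _hlip, hφge, hanti, hmono, ⟨Td, hdiff⟩, htend, hΛ0, hsub⟩ := hφ
  -- extract the eventual derivative bound
  have hev := htend.eventually (Metric.ball_mem_nhds (0:ℝ) one_pos)
  rw [Filter.eventually_atTop] at hev
  obtain ⟨T₂, hT₂⟩ := hev
  set T : ℝ := max (max Td T₂) 1 with hT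
  have hT1 : (1:ℝ) ≤ T := le_max_right _ _
  have hT0 : (0:ℝ) < T := lt_of_lt_of_le one_pos hT1
  have hTd : Td ≤ T := le_trans (le_max_left _ _) (le_max_left _ _)
  have hT₂' : T₂ ≤ T := le_trans (le_max_right _ _) (le_max_left _ _)
  set F : ℝ → ℝ := fun t => (Real.log (η t))^2 - 2 * Real.log t with hF
  -- derivative of F for x ≥ T
  have key : ∀ x : ℝ, T ≤ x →
      HasDerivAt F (2 * Real.log (η x) * (deriv η x / η x) - 2 * x⁻¹) x := by
    intro x hx
    have hx0 : 0 < x := lt_of_lt_of_le hT0 hx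
    have hηx : 0 < η x := lt_of_lt_of_le one_pos (hη1 x hx0.le)
    have hd := (hdiff x (le_trans hTd hx)).hasDerivAt
    have hlog := hd.log hηx.ne'
    have hsq := hlog.pow 2
    have hl2 := (Real.hasDerivAt_log hx0.ne').const_mul (2:ℝ)
    have := hsq.sub hl2
    convert this using 1
    · rfl
    · rfl
    · rfl
    push_cast
    ring
  have hFanti : AntitoneOn F (Set.Ici T) := by
    apply antitoneOn_of_deriv_nonpos (convex_Ici T)
    · exact fun x hx => (key x hx).continuousAt.continuousWithinAt
    · intro x hx
      rw [interior_Ici] at hx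
      exact (key x (le_of_lt hx)).differentiableAt.differentiableWithinAt
    · intro x hx
      rw [interior_Ici] at hx
      rw [(key x hx.le).deriv]
      have hx0 : 0 < x := lt_of_lt_of_le hT0 hx.le
      have hb := hT₂ x (le_trans hT₂' hx.le)
      rw [Real.dist_eq, sub_zero] at hb
      have h1 : x * deriv η x / η x * Real.log (η x) ≤ 1 :=
        le_of_lt (lt_of_le_of_lt (le_abs_self _) hb)
      have h2 : x * (deriv η x / η x * Real.log (η x)) ≤ 1 := by
        rw [show x * (deriv η x / η x * Real.log (η x))
            = x * deriv η x / η x * Real.log (η x) by ring]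
        exact h1
      have hxinv : x * x⁻¹ = 1 := mul_inv_cancel₀ hx0.ne'
      nlinarith [h2, hxinv, hx0]
  -- large t bound
  have hlarge : ∀ t : ℝ, T ≤ t → η (η t * t) ≤ Real.exp 1 * η t := by
    intro t ht
    have ht0 : 0 < t := lt_of_lt_of_le hT0 ht
    have hηt : 1 ≤ η t := hη1 t ht0.le
    have hηt0 : 0 < η t := lt_of_lt_of_le one_pos hηt
    have hpt : t ≤ η t * t := le_mul_of_one_le_left ht0.le hηt
    have hpt0 : 0 < η t * t := mul_pos hηt0 ht0
    have hηφ : 1 ≤ η (η t * t) := hη1 _ hpt0.le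
    have hFle : F (η t * t) ≤ F t := hFanti ht (le_trans ht hpt) hpt
    have hlogmul : Real.log (η t * t) = Real.log (η t) + Real.log t :=
      Real.log_mul hηt0.ne' ht0.ne'
    simp only [hF] at hFle
    rw [hlogmul] at hFle
    set a := Real.log (η (η t * t)) with ha
    set b := Real.log (η t) with hb
    have ha0 : 0 ≤ a := Real.log_nonneg hηφ
    have hb0 : 0 ≤ b := Real.log_nonneg hηt
    have hab : a ≤ b + 1 := by nlinarith [hFle, ha0, hb0]
    have : η (η t * t) = Real.exp a := (Real.exp_log (lt_of_lt_of_le one_pos hηφ)).symm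
    rw [this]
    calc Real.exp a ≤ Real.exp (b + 1) := Real.exp_le_exp.mpr hab
      _ = Real.exp 1 * η t := by
          rw [Real.exp_add, Real.exp_log hηt0]; ring
  -- small t bound
  set C : ℝ := η (η T * T) with hC
  have hC1 : 1 ≤ C := hη1 _ (mul_pos (lt_of_lt_of_le one_pos (hη1 T hT0.le)) hT0).le
  refine ⟨max (Real.exp 1) C, fun t ht0 => ?_⟩
  have hηt : 1 ≤ η t := hη1 t ht0.le
  have hηt0 : 0 < η t := lt_of_lt_of_le one_pos hηt
  have hpt : t ≤ η t * t := le_mul_of_one_le_left ht0.le hηt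
  have hpt0 : 0 < η t * t := mul_pos hηt0 ht0
  have hM0 : 0 ≤ max (Real.exp 1) C := le_trans zero_le_one (le_trans hC1 (le_max_right _ _))
  rcases le_or_gt T t with hTt | hTt
  · calc η (η t * t) ≤ Real.exp 1 * η t := hlarge t hTt
      _ ≤ max (Real.exp 1) C * η t :=
        mul_le_mul_of_nonneg_right (le_max_left _ _) hηt0.le
  · -- t < T
    rcases lt_or_ge (η t * t) 1 with hlt | hge
    · have ht1 : t < 1 := lt_of_le_of_lt hpt hlt
      have h := hanti ⟨ht0, ht1⟩ ⟨hpt0, hlt⟩ hpt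
      calc η (η t * t) ≤ η t := h
        _ ≤ max (Real.exp 1) C * η t :=
          le_mul_of_one_le_left hηt0.le (le_trans (le_trans hC1 (le_max_right _ _)) (le_refl _))
    · -- 1 ≤ η t * t ≤ η T * T
      have hub : η t * t ≤ η T * T := by
        have := hφmono (Set.mem_Ici.mpr ht0.le) (Set.mem_Ici.mpr hT0.le) hTt.le
        rwa [hφη t ht0.le, hφη T hT0.le] at this
      have hTub : 1 ≤ η T * T :=
        le_trans hge hub
      have h := hmono (Set.mem_Ici.mpr hge) (Set.mem_Ici.mpr hTub) hub
      calc η (η t * t) ≤ C := h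
        _ ≤ max (Real.exp 1) C := le_max_right _ _
        _ ≤ max (Real.exp 1) C * η t := le_mul_of_one_le_right hM0 hηt
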